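/- Let $H$ be a Hilbert space, $S \subseteq H$ a closed subspace, $P$ the orthogonal projection onto $S$. Let $a : H \to H$ be a bounded self-adjoint positive operator with $\|a - I\| \le \eta < 1$. Define the weighted projection $P_a : H \to S$ by $\langle a P_a f, s\rangle = \langle a f, s\rangle$ for all $s \in S$. Then $P_a$ is well-defined, and for all $f \in H$, $\|P_a f - P f\| \le \frac{2\eta}{1-\eta}\|f\|$. -/

import Mathlib

open Real

/-- Comparison of a weighted projection with the orthogonal projection: if `a` is a
bounded self-adjoint positive operator with `‖a - I‖ ≤ η < 1` and `P_a f ∈ S` is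
defined by `⟨a P_a f, s⟩ = ⟨a f, s⟩` for all `s ∈ S`, then `P_a f` exists, is unique,
and `‖P_a f - P f‖ ≤ 2η/(1-η) ‖f‖`. -/
theorem stmt_13 {H : Type*} [NormedAddCommGroup H] [InnerProductSpace ℝ H]
    [CompleteSpace H] (S : Submodule ℝ H) [CompleteSpace S]
    (a : H →L[ℝ] H) (η : ℝ) (hη0 : 0 ≤ η) (hη1 : η < 1)
    (hsym : ∀ u v : H, (inner ℝ (a u) v : ℝ) = (inner ℝ u (a v) : ℝ))
    (hpos : ∀ v : H, 0 ≤ (inner ℝ (a v) v : ℝ))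
    (ha : ‖a - 1‖ ≤ η) :
    ∀ f : H, ∃ g : H,
      (g ∈ S ∧ ∀ s ∈ S, (inner ℝ (a g) s : ℝ) = (inner ℝ (a f) s : ℝ)) ∧
      (∀ g' : H, (g' ∈ S ∧ ∀ s ∈ S, (inner ℝ (a g') s : ℝ) = (inner ℝ (a f) s : ℝ)) → g' = g) ∧
      ‖g - (S.orthogonalProjectionOnto f : H)‖ ≤ 2 * η / (1 - η) * ‖f‖ := by
  intro f
  -- coercivity on H: (1-η)‖v‖² ≤ ⟪a v, v⟫
  have key : ∀ v : H, (1 - η) * ‖v‖ * ‖v‖ ≤ (inner ℝ (a v) v : ℝ) := by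
    intro v
    have h1 : (inner ℝ ((a - 1) v) v : ℝ) = (inner ℝ (a v) v : ℝ) - ‖v‖ ^ 2 := by
      simp [inner_sub_left, real_inner_self_eq_norm_sq]
    have h2 : |(inner ℝ ((a - 1) v) v : ℝ)| ≤ η * ‖v‖ * ‖v‖ := by
      have := abs_real_inner_le_norm ((a - 1) v) v
      have hb : ‖(a - 1) v‖ ≤ η * ‖v‖ :=
        le_trans ((a - 1).le_opNorm v) (by
          exact mul_le_mul_of_nonneg_right ha (norm_nonneg v))
      calc |(inner ℝ ((a - 1) v) v : ℝ)| ≤ ‖(a - 1) v‖ * ‖v‖ := this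
        _ ≤ η * ‖v‖ * ‖v‖ := mul_le_mul_of_nonneg_right hb (norm_nonneg v)
    nlinarith [h1, abs_le.mp h2]
  let ι : S →L[ℝ] H := S.subtypeL
  -- bilinear form on S
  let B : S →L[ℝ] S →L[ℝ] ℝ :=
    ((ContinuousLinearMap.compSL S H ℝ (RingHom.id ℝ) (RingHom.id ℝ)).flip ι).comp ((innerSL ℝ).comp (a.comp ι))
  have hB : ∀ u v : S, B u v = (inner ℝ (a (u : H)) (v : H) : ℝ) := fun u v => rfl
  have coer : IsCoercive B := by
    refine ⟨1 - η, by linarith, fun u => ?_⟩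
    rw [hB]
    exact key u
  -- RHS element: projection of a f onto S
  set w : S := S.orthogonalProjectionOnto (a f) with hw
  have hwf : ∀ s : S, (inner ℝ ((w : H)) (s : H) : ℝ) = (inner ℝ (a f) (s : H) : ℝ) := by
    intro s
    have := S.starProjection_inner_eq_zero (a f) (s : H) s.2
    have h' : (inner ℝ (a f - (w : H)) (s : H) : ℝ) = 0 := this
    rw [inner_sub_left] at h'
    linarith
  set g₀ : S := coer.continuousLinearEquivOfBilin.symm w with hg₀
  have hgw : coer.continuousLinearEquivOfBilin g₀ = w := by
    simp [hg₀]
  have hmain : ∀ s : S, (inner ℝ (a (g₀ : H)) (s : H) : ℝ) = (inner ℝ (a f) (s : H) : ℝ) := by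
    intro s
    have := coer.continuousLinearEquivOfBilin_apply g₀ s
    rw [hgw, hB] at this
    rw [← this]
    have : (inner ℝ w s : ℝ) = (inner ℝ ((w : H)) (s : H) : ℝ) := rfl
    rw [this, hwf]
  refine ⟨(g₀ : H), ⟨g₀.2, fun s hs => hmain ⟨s, hs⟩⟩, ?_, ?_⟩
  · -- uniqueness
    rintro g' ⟨hg'S, hg'⟩
    have hd : ∀ s : H, s ∈ S → (inner ℝ (a (g' - (g₀ : H))) s : ℝ) = 0 := by
      intro s hs
      rw [map_sub, inner_sub_left, hg' s hs, hmain ⟨s, hs⟩]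
      ring
    have hdd := hd (g' - (g₀ : H)) (S.sub_mem hg'S g₀.2)
    have hk2 := key (g' - (g₀ : H))
    have hn : ‖g' - (g₀ : H)‖ = 0 := by
      by_contra hc
      have hpos' : 0 < ‖g' - (g₀ : H)‖ := lt_of_le_of_ne (norm_nonneg _) (Ne.symm hc)
      nlinarith [mul_pos (show (0:ℝ) < 1 - η by linarith) (mul_pos hpos' hpos')]
    have := norm_eq_zero.mp hn
    exact sub_eq_zero.mp this
  · -- the error bound
    set P : H := (S.orthogonalProjectionOnto f : H) with hP
    set e : H := (g₀ : H) - P with he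
    have heS : e ∈ S := S.sub_mem g₀.2 (S.orthogonalProjectionOnto f).2
    have hfP : (inner ℝ (f - P) e : ℝ) = 0 :=
      S.starProjection_inner_eq_zero f e heS
    have hae : (inner ℝ (a e) e : ℝ) = (inner ℝ (a (f - P)) e : ℝ) := by
      have h1 := hmain ⟨e, heS⟩
      have : (inner ℝ (a (g₀ : H)) e : ℝ) = (inner ℝ (a f) e : ℝ) := h1
      rw [he] at *
      rw [map_sub, inner_sub_left, this, ← inner_sub_left, ← map_sub]
    have hsplit : (inner ℝ (a (f - P)) e : ℝ) = (inner ℝ ((a - 1) (f - P)) e : ℝ) := by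
      simp [inner_sub_left, hfP]
    have hbound : (inner ℝ (a e) e : ℝ) ≤ η * ‖f - P‖ * ‖e‖ := by
      rw [hae, hsplit]
      calc (inner ℝ ((a - 1) (f - P)) e : ℝ) ≤ ‖(a - 1) (f - P)‖ * ‖e‖ :=
            real_inner_le_norm _ _
        _ ≤ η * ‖f - P‖ * ‖e‖ := by
            have hb : ‖(a - 1) (f - P)‖ ≤ η * ‖f - P‖ :=
              le_trans ((a - 1).le_opNorm _) (mul_le_mul_of_nonneg_right ha (norm_nonneg _))
            exact mul_le_mul_of_nonneg_right hb (norm_nonneg e)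
    have hke := key e
    have hfPle : ‖f - P‖ ≤ ‖f‖ := by
      have h0' : (inner ℝ (f - P) P : ℝ) = 0 :=
        S.starProjection_inner_eq_zero f P (S.orthogonalProjectionOnto f).2
      have hpyth : ‖f‖ ^ 2 = ‖f - P‖ ^ 2 + ‖P‖ ^ 2 := by
        have h1 := norm_add_sq_real (f - P) P
        have h2 : f - P + P = f := by abel
        rw [h2, h0'] at h1
        linarith
      nlinarith [norm_nonneg (f - P), norm_nonneg f, sq_nonneg ‖P‖]
    have hene : ‖e‖ ≤ η / (1 - η) * ‖f‖ := by
      rcases eq_or_lt_of_le (norm_nonneg e) with h0 | h0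
      · rw [← h0]
        have h1η : (0:ℝ) < 1 - η := by linarith
        positivity
      · have h1 : (1 - η) * ‖e‖ ≤ η * ‖f‖ := by
          have : (1 - η) * ‖e‖ * ‖e‖ ≤ η * ‖f‖ * ‖e‖ := by
            calc (1 - η) * ‖e‖ * ‖e‖ ≤ (inner ℝ (a e) e : ℝ) := hke
              _ ≤ η * ‖f - P‖ * ‖e‖ := hbound
              _ ≤ η * ‖f‖ * ‖e‖ := by
                  exact mul_le_mul_of_nonneg_right
                    (mul_le_mul_of_nonneg_left hfPle hη0) (norm_nonneg e)
          exact le_of_mul_le_mul_right this h0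
        rw [div_mul_eq_mul_div, le_div_iff₀ (by linarith)]
        linarith [h1]
    calc ‖(g₀ : H) - P‖ = ‖e‖ := by rw [he]
      _ ≤ η / (1 - η) * ‖f‖ := hene
      _ ≤ 2 * η / (1 - η) * ‖f‖ := by
          apply mul_le_mul_of_nonneg_right _ (norm_nonneg f)
          exact (div_le_div_iff_of_pos_right (by linarith)).mpr (by linarith)
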